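/- Let M ≠ N be natural numbers with Ostrowski representations Σ_k b_k q_k and Σ_k c_k q_k respectively, and let n be maximal with b_n ≠ c_n. Then M < N if and only if b_n < c_n. -/

import Mathlib

lemma ostrowski_qfacts (aCF q : ℕ → ℤ)
    (hq0 : q 0 = 1) (hq1 : q 1 = aCF 1)
    (hqrec : ∀ k, q (k + 2) = aCF (k + 2) * q (k + 1) + q k)
    (haCF : ∀ k ≥ 1, 1 ≤ aCF k) :
    ∀ k, 1 ≤ q k ∧ q k ≤ q (k + 1) := by
  intro k
  induction k with
  | zero =>
    constructor
    · omega
    · rw [hq0, hq1]; exact haCF 1 (by norm_num)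
  | succ k ih =>
    obtain ⟨h1, h2⟩ := ih
    have h3 : 1 ≤ q (k + 1) := le_trans h1 h2
    refine ⟨h3, ?_⟩
    have h4 : 1 ≤ aCF (k + 2) := haCF (k + 2) (by omega)
    have := hqrec k
    nlinarith

lemma ostrowski_bound (aCF q : ℕ → ℤ)
    (hq0 : q 0 = 1) (hq1 : q 1 = aCF 1)
    (hqrec : ∀ k, q (k + 2) = aCF (k + 2) * q (k + 1) + q k)
    (haCF : ∀ k ≥ 1, 1 ≤ aCF k)
    (b : ℕ → ℕ)
    (hb1 : (b 1 : ℤ) < aCF 1)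
    (hble : ∀ k ≥ 1, (b k : ℤ) ≤ aCF k)
    (hbcons : ∀ k ≥ 2, (b k : ℤ) = aCF k → b (k - 1) = 0) :
    ∀ n, ∑ k ∈ Finset.range n, (b (k + 1) : ℤ) * q k < q n := by
  have hqf := ostrowski_qfacts aCF q hq0 hq1 hqrec haCF
  have hqpos : ∀ k, 1 ≤ q k := fun k => (hqf k).1
  have hqmono : Monotone q := monotone_nat_of_le_succ fun k => (hqf k).2
  intro n
  induction n using Nat.strong_induction_on with
  | _ n ih =>
    match n with
    | 0 => simp [hq0]
    | (m + 1) =>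
      rw [Finset.sum_range_succ]
      rcases Nat.eq_zero_or_pos (b (m + 1)) with hz | hpos
      · rw [hz]
        simp only [Nat.cast_zero, zero_mul, add_zero]
        exact lt_of_lt_of_le (ih m (by omega)) (hqmono (by omega))
      · rcases lt_or_eq_of_le (hble (m + 1) (by omega)) with hlt | heq
        · -- b (m+1) ≤ aCF (m+1) - 1
          have hb : (b (m + 1) : ℤ) ≤ aCF (m + 1) - 1 := by omega
          have h1 : ∑ k ∈ Finset.range m, (b (k + 1) : ℤ) * q k < q m := ih m (by omega)
          have h2 : aCF (m + 1) * q m ≤ q (m + 1) := by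
            match m with
            | 0 => show aCF 1 * q 0 ≤ q 1; rw [hq0, hq1]; omega
            | (j + 1) =>
              show aCF (j + 2) * q (j + 1) ≤ q (j + 2)
              have h5 := hqrec j
              have h6 := hqpos j
              omega
          have hqm := hqpos m
          nlinarith
        · -- b (m+1) = aCF (m+1)
          match m with
          | 0 =>
            have heq' : (b 1 : ℤ) = aCF 1 := heq
            omega
          | (j + 1) =>
            have hz : b (j + 1) = 0 := by
              have := hbcons (j + 2) (by omega) heq
              simpa using this
            rw [Finset.sum_range_succ, hz]
            simp only [Nat.cast_zero, zero_mul, add_zero]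
            have h1 : ∑ k ∈ Finset.range j, (b (k + 1) : ℤ) * q k < q j := ih j (by omega)
            have heq' : (b (j + 2) : ℤ) = aCF (j + 2) := heq
            have h5 : q (j + 2) = (b (j + 2) : ℤ) * q (j + 1) + q j := by
              rw [heq']; exact hqrec j
            show ∑ k ∈ Finset.range j, (b (k + 1) : ℤ) * q k + (b (j + 2) : ℤ) * q (j + 1) < q (j + 2)
            omega

lemma ostrowski_cmp (aCF q : ℕ → ℤ)
    (hq0 : q 0 = 1) (hq1 : q 1 = aCF 1)
    (hqrec : ∀ k, q (k + 2) = aCF (k + 2) * q (k + 1) + q k)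
    (haCF : ∀ k ≥ 1, 1 ≤ aCF k)
    (b c : ℕ → ℕ)
    (hb1 : (b 1 : ℤ) < aCF 1)
    (hble : ∀ k ≥ 1, (b k : ℤ) ≤ aCF k)
    (hbcons : ∀ k ≥ 2, (b k : ℤ) = aCF k → b (k - 1) = 0)
    (n K : ℕ) (hn1 : 1 ≤ n) (hnK : n ≤ K)
    (hlt : b n < c n) (hagree : ∀ m, n < m → b m = c m) :
    ∑ k ∈ Finset.range K, (b (k + 1) : ℤ) * q k < ∑ k ∈ Finset.range K, (c (k + 1) : ℤ) * q k := by
  have hqf := ostrowski_qfacts aCF q hq0 hq1 hqrec haCF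
  have hqpos : ∀ k, 1 ≤ q k := fun k => (hqf k).1
  have hsplit : ∀ d : ℕ → ℕ, ∑ k ∈ Finset.range K, (d (k + 1) : ℤ) * q k =
      ∑ k ∈ Finset.range n, (d (k + 1) : ℤ) * q k +
      ∑ k ∈ Finset.Ico n K, (d (k + 1) : ℤ) * q k := by
    intro d
    rw [← Finset.sum_range_add_sum_Ico _ hnK]
  rw [hsplit b, hsplit c]
  have htail : ∑ k ∈ Finset.Ico n K, (b (k + 1) : ℤ) * q k =
      ∑ k ∈ Finset.Ico n K, (c (k + 1) : ℤ) * q k := by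
    apply Finset.sum_congr rfl
    intro k hk
    rw [Finset.mem_Ico] at hk
    rw [hagree (k + 1) (by omega)]
  rw [htail]
  have hhead : ∑ k ∈ Finset.range n, (b (k + 1) : ℤ) * q k <
      ∑ k ∈ Finset.range n, (c (k + 1) : ℤ) * q k := by
    obtain ⟨m, rfl⟩ : ∃ m, n = m + 1 := ⟨n - 1, by omega⟩
    rw [Finset.sum_range_succ, Finset.sum_range_succ]
    have h1 : ∑ k ∈ Finset.range m, (b (k + 1) : ℤ) * q k < q m :=
      ostrowski_bound aCF q hq0 hq1 hqrec haCF b hb1 hble hbcons m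
    have h2 : (0 : ℤ) ≤ ∑ k ∈ Finset.range m, (c (k + 1) : ℤ) * q k :=
      Finset.sum_nonneg fun k _ => mul_nonneg (by positivity) (by linarith [hqpos k])
    have h3 : (b (m + 1) : ℤ) + 1 ≤ (c (m + 1) : ℤ) := by exact_mod_cast hlt
    have hqm := hqpos m
    nlinarith
  omega

theorem ostrowski_order_nat (a : ℝ) (ha : Irrational a)
    (aCF : ℕ → ℤ) (ζ : ℕ → ℝ)
    (hζ0 : ζ 0 = a)
    (hfloor : ∀ k, aCF k = ⌊ζ k⌋)
    (hζ : ∀ k, ζ k = (aCF k : ℝ) + 1 / ζ (k + 1))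
    (p q : ℕ → ℤ)
    (hq0 : q 0 = 1) (hq1 : q 1 = aCF 1)
    (hqrec : ∀ k, q (k + 2) = aCF (k + 2) * q (k + 1) + q k)
    (hp0 : p 0 = aCF 0) (hp1 : p 1 = aCF 1 * aCF 0 + 1)
    (hprec : ∀ k, p (k + 2) = aCF (k + 2) * p (k + 1) + p k)
    (β : ℕ → ℝ)
    (hβ : ∀ k, β k = (q k : ℝ) * a - (p k : ℝ)) (M N : ℕ)
    (b : ℕ → ℕ)
    (hbfin : {k | b k ≠ 0}.Finite)
    (hb0 : b 0 = 0)
    (hb1 : (b 1 : ℤ) < aCF 1)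
    (hble : ∀ k ≥ 1, (b k : ℤ) ≤ aCF k)
    (hbcons : ∀ k ≥ 2, (b k : ℤ) = aCF k → b (k - 1) = 0)
    (hMrep : (M : ℤ) = ∑ᶠ k : ℕ, (b (k + 1) : ℤ) * q k)
    (c : ℕ → ℕ)
    (hcfin : {k | c k ≠ 0}.Finite)
    (hc0 : c 0 = 0)
    (hc1 : (c 1 : ℤ) < aCF 1)
    (hcle : ∀ k ≥ 1, (c k : ℤ) ≤ aCF k)
    (hccons : ∀ k ≥ 2, (c k : ℤ) = aCF k → c (k - 1) = 0)
    (hNrep : (N : ℤ) = ∑ᶠ k : ℕ, (c (k + 1) : ℤ) * q k)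
    (hMN : M ≠ N) (n : ℕ) (hn : b n ≠ c n) (hnmax : ∀ m, n < m → b m = c m) :
    M < N ↔ b n < c n := by
  -- ζ k is irrational for all k
  have hirr : ∀ k, Irrational (ζ k) := by
    intro k
    induction k with
    | zero => rwa [hζ0]
    | succ k ih =>
      have h1 : Irrational (ζ k - (aCF k : ℝ)) := ih.sub_intCast (aCF k)
      have h2 : (1 : ℝ) / ζ (k + 1) = ζ k - (aCF k : ℝ) := by rw [hζ k]; ring
      have h3 : Irrational (ζ (k + 1))⁻¹ := by rw [← one_div, h2]; exact h1
      exact Irrational.of_inv h3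
  -- aCF k ≥ 1 for k ≥ 1
  have haCF : ∀ k ≥ 1, 1 ≤ aCF k := by
    intro k hk
    obtain ⟨j, rfl⟩ : ∃ j, k = j + 1 := ⟨k - 1, by omega⟩
    have hfr : (0 : ℝ) < ζ j - (⌊ζ j⌋ : ℝ) := by
      have h1 : (⌊ζ j⌋ : ℝ) ≤ ζ j := Int.floor_le _
      have h2 : ζ j ≠ (⌊ζ j⌋ : ℝ) := (hirr j).ne_int _
      cases lt_or_eq_of_le h1 with
      | inl h => linarith
      | inr h => exact absurd h.symm h2
    have hfr2 : ζ j - (⌊ζ j⌋ : ℝ) < 1 := by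
      have := Int.lt_floor_add_one (ζ j)
      linarith
    have h2 : (1 : ℝ) / ζ (j + 1) = ζ j - (aCF j : ℝ) := by rw [hζ j]; ring
    rw [hfloor j] at h2
    have hpos : 0 < (1 : ℝ) / ζ (j + 1) := by rw [h2]; exact hfr
    have hζpos : 0 < ζ (j + 1) := by
      by_contra h
      push_neg at h
      have : (1 : ℝ) / ζ (j + 1) ≤ 0 := div_nonpos_of_nonneg_of_nonpos zero_le_one h
      linarith
    have hlt1 : (1 : ℝ) / ζ (j + 1) < 1 := by rw [h2]; exact hfr2
    have hgt1 : 1 < ζ (j + 1) := by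
      rw [div_lt_one hζpos] at hlt1
      exact hlt1
    rw [hfloor (j + 1)]
    exact Int.le_floor.mpr (by exact_mod_cast hgt1.le)
  -- choose a common truncation bound K
  set F := hbfin.toFinset ∪ hcfin.toFinset with hF
  set K := n + 1 + F.sup id with hK
  have hKbound : ∀ m, K ≤ m → b m = 0 ∧ c m = 0 := by
    intro m hm
    constructor
    · by_contra h
      have : m ∈ F := Finset.mem_union_left _ (hbfin.mem_toFinset.mpr h)
      have := Finset.le_sup (f := id) this
      simp only [id] at this
      omega
    · by_contra h
      have : m ∈ F := Finset.mem_union_right _ (hcfin.mem_toFinset.mpr h)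
      have := Finset.le_sup (f := id) this
      simp only [id] at this
      omega
  have hMsum : (M : ℤ) = ∑ k ∈ Finset.range K, (b (k + 1) : ℤ) * q k := by
    rw [hMrep]
    apply finsum_eq_finset_sum_of_support_subset
    intro k hk
    simp only [Function.mem_support, Finset.coe_range, Set.mem_Iio]
    by_contra h
    push_neg at h
    have hz : b (k + 1) = 0 := (hKbound (k + 1) (by omega)).1
    simp only [Function.mem_support] at hk
    rw [hz] at hk
    simp at hk
  have hNsum : (N : ℤ) = ∑ k ∈ Finset.range K, (c (k + 1) : ℤ) * q k := by
    rw [hNrep]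
    apply finsum_eq_finset_sum_of_support_subset
    intro k hk
    simp only [Function.mem_support, Finset.coe_range, Set.mem_Iio]
    by_contra h
    push_neg at h
    have hz : c (k + 1) = 0 := (hKbound (k + 1) (by omega)).2
    simp only [Function.mem_support] at hk
    rw [hz] at hk
    simp at hk
  have hn1 : 1 ≤ n := by
    rcases Nat.eq_zero_or_pos n with rfl | h
    · rw [hb0, hc0] at hn; exact absurd rfl hn
    · exact h
  have hnK : n ≤ K := by omega
  constructor
  · intro hMN'
    by_contra h
    push_neg at h
    have hcb : c n < b n := lt_of_le_of_ne h (fun e => hn e.symm)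
    have := ostrowski_cmp aCF q hq0 hq1 hqrec haCF c b hc1 hcle hccons n K hn1 hnK hcb
      (fun m hm => (hnmax m hm).symm)
    rw [← hNsum, ← hMsum] at this
    have : N < M := by exact_mod_cast this
    omega
  · intro hlt
    have := ostrowski_cmp aCF q hq0 hq1 hqrec haCF b c hb1 hble hbcons n K hn1 hnK hlt hnmax
    rw [← hMsum, ← hNsum] at this
    exact_mod_cast this
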